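/- Let M be a Koszul A-module. Then for each i ≥ 0 the A_0-module Ω^i(M)/JΩ^i(M) ≅ Ω^i(M)_i is projective, where Ω denotes the graded syzygy operator. -/

import Mathlib

open DirectSum CategoryTheory

namespace GenK

variable (k A : Type) [Field k] [Ring A] [Algebra k A] (𝒜 : ℕ → Submodule k A)

/-- The ideal `J = ⊕_{i ≥ 1} A_i`, as the left ideal generated by the
positive-degree homogeneous components. -/
noncomputable def Jideal : Ideal A :=
  Submodule.span A (⋃ i : ℕ, ((𝒜 (i + 1) : Submodule k A) : Set A))

/-- A locally finite graded module over the graded algebra `A = ⊕ 𝒜 i`. -/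
structure GMod [GradedAlgebra 𝒜] where
  M : Type
  [acg : AddCommGroup M]
  [modA : Module A M]
  [modk : Module k M]
  [tower : IsScalarTower k A M]
  gr : ℕ → Submodule k M
  [decomp : DirectSum.Decomposition gr]
  [gsmul : SetLike.GradedSMul 𝒜 gr]
  locFin : ∀ i, FiniteDimensional k (gr i)

attribute [instance] GMod.acg GMod.modA GMod.modk GMod.tower GMod.decomp GMod.gsmul

variable {k A 𝒜} [GradedAlgebra 𝒜]

/-- A graded module is generated in degree `s` if `M = A · M_s`. -/
def GMod.gen (N : GMod k A 𝒜) (s : ℕ) : Prop :=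
  Submodule.span A ((N.gr s : Submodule k N.M) : Set N.M) = ⊤

instance (N : GMod k A 𝒜) (i : ℕ) : SMul (𝒜 0) (N.gr i) :=
  ⟨fun a m => ⟨(a : A) • (m : N.M), by
    have h := SetLike.GradedSMul.smul_mem (A := 𝒜) (B := N.gr) a.2 m.2
    simpa using h⟩⟩

@[simp] lemma GMod.smul_coe (N : GMod k A 𝒜) (i : ℕ) (a : 𝒜 0) (m : N.gr i) :
    ((a • m : N.gr i) : N.M) = (a : A) • (m : N.M) := rfl

/-- The degree `i` component of a graded module is a module over `A₀ = 𝒜 0`. -/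
instance (N : GMod k A 𝒜) (i : ℕ) : Module (𝒜 0) (N.gr i) where
  one_smul m := Subtype.ext (by simp)
  mul_smul a b m := Subtype.ext (by simp [mul_smul])
  smul_zero a := Subtype.ext (by simp)
  smul_add a m n := Subtype.ext (by simp)
  add_smul a b m := Subtype.ext (by simp [add_smul])
  zero_smul m := Subtype.ext (by simp)

/-- A tower of minimal graded projective covers computing the graded syzygies
`N i = Ω^i(M₀)`, with `P i` a graded projective cover of `N i`. -/
structure SyzTower (M₀ : GMod k A 𝒜) where
  N : ℕ → GMod k A 𝒜
  zero : N 0 = M₀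
  P : ℕ → GMod k A 𝒜
  proj : ∀ i, Module.Projective A (P i).M
  p : ∀ i, (P i).M →ₗ[A] (N i).M
  surj : ∀ i, Function.Surjective (p i)
  graded : ∀ i j, ∀ x ∈ (P i).gr j, p i x ∈ (N i).gr j
  small : ∀ i (Q : Submodule A (P i).M), Q ⊔ LinearMap.ker (p i) = ⊤ → Q = ⊤
  ι : ∀ i, (N (i + 1)).M →ₗ[A] (P i).M
  inj : ∀ i, Function.Injective (ι i)
  rng : ∀ i, LinearMap.range (ι i) = LinearMap.ker (p i)
  gr_eq : ∀ i j, (N (i + 1)).gr j = ((P i).gr j).comap ((ι i).restrictScalars k)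

/-- `M` is a Koszul module: it is generated in degree 0 and has a (minimal) graded
projective resolution whose `i`-th term is generated in degree `i`. -/
def IsKoszul (M₀ : GMod k A 𝒜) : Prop :=
  M₀.gen 0 ∧ ∃ T : SyzTower M₀, ∀ i, (T.P i).gen i

end GenK

/-- `A₀ = 𝒜 0` is a self-injective algebra: every projective `A₀`-module is injective. -/
def GenK.SelfInjectiveDegZero (k A : Type) [Field k] [Ring A] [Algebra k A]
    (𝒜 : ℕ → Submodule k A) [GradedAlgebra 𝒜] : Prop :=
  ∀ (V : Type) [AddCommGroup V] [Module (𝒜 0) V],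
    Module.Projective (𝒜 0) V → Module.Injective (𝒜 0) V

namespace GenK

variable {k A : Type} [Field k] [Ring A] [Algebra k A] {𝒜 : ℕ → Submodule k A}
  [GradedAlgebra 𝒜]

/-- Degree `j` component of an element, as an element of the big module. -/
noncomputable def GMod.pr (N : GMod k A 𝒜) (j : ℕ) (x : N.M) : N.M :=
  (DirectSum.decompose N.gr x j : N.M)

lemma GMod.pr_mem (N : GMod k A 𝒜) (j : ℕ) (x : N.M) : N.pr j x ∈ N.gr j :=
  SetLike.coe_mem _

lemma GMod.pr_of_mem_same (N : GMod k A 𝒜) {j : ℕ} {x : N.M} (hx : x ∈ N.gr j) :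
    N.pr j x = x :=
  DirectSum.decompose_of_mem_same _ hx

lemma GMod.pr_of_mem_ne (N : GMod k A 𝒜) {l j : ℕ} {x : N.M} (hx : x ∈ N.gr l)
    (h : l ≠ j) : N.pr j x = 0 :=
  DirectSum.decompose_of_mem_ne N.gr hx h

lemma GMod.pr_zero (N : GMod k A 𝒜) (j : ℕ) : N.pr j 0 = 0 := by
  simp [GMod.pr]

lemma GMod.pr_add (N : GMod k A 𝒜) (j : ℕ) (x y : N.M) :
    N.pr j (x + y) = N.pr j x + N.pr j y := by
  simp [GMod.pr, DirectSum.decompose_add]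

lemma GMod.mem_of_pr_eq (N : GMod k A 𝒜) {j : ℕ} {x : N.M} (h : N.pr j x = x) :
    x ∈ N.gr j := h ▸ N.pr_mem j x

/-- homogeneous scalars shift degrees of components. -/
lemma GMod.pr_smul (N : GMod k A 𝒜) {m : ℕ} {a : A} (ha : a ∈ 𝒜 m) (l : ℕ) (x : N.M) :
    N.pr (m + l) (a • x) = a • N.pr l x := by
  induction x using DirectSum.Decomposition.inductionOn N.gr with
  | zero => simp [N.pr_zero]
  | @homogeneous t y =>
    have hy : (y : N.M) ∈ N.gr t := y.2
    have hay : a • (y : N.M) ∈ N.gr (m + t) := by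
      have := SetLike.GradedSMul.smul_mem (A := 𝒜) (B := N.gr) ha hy
      simpa using this
    by_cases htl : t = l
    · subst htl
      rw [N.pr_of_mem_same hay, N.pr_of_mem_same hy]
    · rw [N.pr_of_mem_ne hay (by omega), N.pr_of_mem_ne hy htl, smul_zero]
  | add y z hy hz =>
    rw [smul_add, N.pr_add, N.pr_add, hy, hz, smul_add]

/-- components below the degree of a homogeneous scalar vanish. -/
lemma GMod.pr_smul_low (N : GMod k A 𝒜) {m : ℕ} {a : A} (ha : a ∈ 𝒜 m) {j : ℕ}
    (hj : j < m) (x : N.M) : N.pr j (a • x) = 0 := by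
  induction x using DirectSum.Decomposition.inductionOn N.gr with
  | zero => simp [N.pr_zero]
  | @homogeneous t y =>
    have hay : a • (y : N.M) ∈ N.gr (m + t) := by
      have := SetLike.GradedSMul.smul_mem (A := 𝒜) (B := N.gr) ha y.2
      simpa using this
    exact N.pr_of_mem_ne hay (by omega)
  | add y z hy hz => rw [smul_add, N.pr_add, hy, hz, add_zero]

lemma GMod.vanish_smul (N : GMod k A 𝒜) {s : ℕ} {x : N.M}
    (hx : ∀ j < s, N.pr j x = 0) (a : A) : ∀ j < s, N.pr j (a • x) = 0 := by
  induction a using DirectSum.Decomposition.inductionOn 𝒜 with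
  | zero => intro j hj; simp [N.pr_zero]
  | @homogeneous m b =>
    intro j hj
    by_cases hjm : j < m
    · exact N.pr_smul_low b.2 hjm x
    · have : j = m + (j - m) := by omega
      rw [this, N.pr_smul b.2, hx _ (by omega), smul_zero]
  | add b c hb hc =>
    intro j hj
    rw [add_smul, N.pr_add, hb j hj, hc j hj, add_zero]

/-- If `N` is generated in degree `s` then all components below `s` vanish. -/
lemma GMod.gen_pr_eq_zero (N : GMod k A 𝒜) {s : ℕ} (hN : N.gen s) {j : ℕ} (hj : j < s)
    (x : N.M) : N.pr j x = 0 := by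
  have hx : x ∈ Submodule.span A ((N.gr s : Submodule k N.M) : Set N.M) := by
    rw [hN]; trivial
  refine Submodule.span_induction (p := fun y _ => ∀ l < s, N.pr l y = 0)
    ?_ ?_ ?_ ?_ hx j hj
  · intro y hy l hl; exact N.pr_of_mem_ne hy (by omega)
  · intro l hl; simp [N.pr_zero]
  · intro y z _ _ hy hz l hl; rw [N.pr_add, hy l hl, hz l hl, add_zero]
  · intro a y _ hy; exact N.vanish_smul hy a

end GenK
namespace GenK

variable {k A : Type} [Field k] [Ring A] [Algebra k A] {𝒜 : ℕ → Submodule k A}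
  [GradedAlgebra 𝒜]

/-- A map of graded modules is graded if it preserves degrees. -/
def IsGr {N N' : GMod k A 𝒜} (f : N.M →ₗ[A] N'.M) : Prop :=
  ∀ j : ℕ, ∀ x ∈ N.gr j, f x ∈ N'.gr j

lemma IsGr.pr_comm {N N' : GMod k A 𝒜} {f : N.M →ₗ[A] N'.M} (hf : IsGr f)
    (j : ℕ) (x : N.M) : N'.pr j (f x) = f (N.pr j x) := by
  induction x using DirectSum.Decomposition.inductionOn N.gr with
  | zero => simp [GMod.pr_zero]
  | @homogeneous t y =>
    have hy : f (y : N.M) ∈ N'.gr t := hf t y y.2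
    by_cases htj : t = j
    · subst htj
      rw [N'.pr_of_mem_same hy, N.pr_of_mem_same y.2]
    · rw [N'.pr_of_mem_ne hy htj, N.pr_of_mem_ne y.2 htj, map_zero]
  | add y z hy hz =>
    rw [map_add, GMod.pr_add, GMod.pr_add, map_add, hy, hz]

/-- Components of a surjective graded map are surjective. -/
lemma IsGr.component_surj {N N' : GMod k A 𝒜} {f : N.M →ₗ[A] N'.M} (hf : IsGr f)
    (hs : Function.Surjective f) {j : ℕ} {y : N'.M} (hy : y ∈ N'.gr j) :
    ∃ x ∈ N.gr j, f x = y := by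
  obtain ⟨x, rfl⟩ := hs y
  exact ⟨N.pr j x, N.pr_mem j x, by rw [← hf.pr_comm, N'.pr_of_mem_same hy]⟩

section Grd

variable {N N' : GMod k A 𝒜} (f : N.M →ₗ[A] N'.M)

/-- The degree-zero (graded) part of an `A`-linear map, as a bare function. -/
noncomputable def grdFun : N.M → N'.M := fun x =>
  (DirectSum.toAddMonoid (fun j =>
    (⟨⟨N'.pr j, N'.pr_zero j⟩, N'.pr_add j⟩ : N'.M →+ N'.M).comp
      (f.toAddMonoidHom.comp ((N.gr j).subtype.toAddMonoidHom)))
    : (⨁ j, N.gr j) →+ N'.M) (DirectSum.decompose N.gr x)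

lemma grdFun_add (x y : N.M) : grdFun f (x + y) = grdFun f x + grdFun f y := by
  unfold grdFun
  rw [DirectSum.decompose_add, map_add]

lemma grdFun_homog {j : ℕ} {x : N.M} (hx : x ∈ N.gr j) :
    grdFun f x = N'.pr j (f x) := by
  unfold grdFun
  rw [DirectSum.decompose_of_mem N.gr hx, DirectSum.toAddMonoid_of]
  rfl

lemma grdFun_zero : grdFun f 0 = 0 := by
  rw [grdFun_homog f (Submodule.zero_mem (N.gr 0)), map_zero, GMod.pr_zero]

lemma grdFun_smul (a : A) (x : N.M) : grdFun f (a • x) = a • grdFun f x := by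
  induction x using DirectSum.Decomposition.inductionOn N.gr with
  | zero => rw [smul_zero, grdFun_zero, smul_zero]
  | @homogeneous t y =>
    induction a using DirectSum.Decomposition.inductionOn 𝒜 with
    | zero => rw [zero_smul, grdFun_zero, zero_smul]
    | @homogeneous m b =>
      have hby : (b : A) • (y : N.M) ∈ N.gr (m + t) := by
        have := SetLike.GradedSMul.smul_mem (A := 𝒜) (B := N.gr) b.2 y.2
        simpa using this
      rw [grdFun_homog f hby, grdFun_homog f y.2, map_smul, N'.pr_smul b.2]
    | add b c hb hc =>
      rw [add_smul, grdFun_add, hb, hc, add_smul]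
  | add y z hy hz =>
    rw [smul_add, grdFun_add, hy, hz, grdFun_add, smul_add]

/-- The graded part of an `A`-linear map, as an `A`-linear map. -/
noncomputable def grd : N.M →ₗ[A] N'.M where
  toFun := grdFun f
  map_add' := grdFun_add f
  map_smul' := grdFun_smul f

lemma grd_homog {j : ℕ} {x : N.M} (hx : x ∈ N.gr j) : grd f x = N'.pr j (f x) :=
  grdFun_homog f hx

lemma grd_isGr : IsGr (grd f) := by
  intro j x hx
  rw [grd_homog f hx]
  exact N'.pr_mem j (f x)

/-- If `g ∘ f = q` with `g, q` graded, then also `g ∘ grd f = q`. -/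
lemma grd_comp {L : GMod k A 𝒜} {g : N'.M →ₗ[A] L.M} (hg : IsGr g)
    {q : N.M →ₗ[A] L.M} (hq : IsGr q) (hgf : g.comp f = q) (x : N.M) :
    g (grd f x) = q x := by
  induction x using DirectSum.Decomposition.inductionOn N.gr with
  | zero => simp
  | @homogeneous t y =>
    have h1 : g (f (y : N.M)) = q y := by
      rw [← hgf]; rfl
    rw [grd_homog f y.2, ← hg.pr_comm, h1, L.pr_of_mem_same (hq t y y.2)]
  | add y z hy hz => rw [map_add, map_add, map_add, hy, hz]

end Grd

end GenK
namespace GenK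

variable {k A : Type} [Field k] [Ring A] [Algebra k A] {𝒜 : ℕ → Submodule k A}
  [GradedAlgebra 𝒜]

/-- The degree-0 component of a product with a degree-0 element. -/
lemma deg0_mul (a : 𝒜 0) (b : A) :
    (DirectSum.decompose 𝒜 ((a : A) * b) 0 : A) = (a : A) * (DirectSum.decompose 𝒜 b 0 : A) := by
  induction b using DirectSum.Decomposition.inductionOn 𝒜 with
  | zero => simp
  | @homogeneous m c =>
    have hac : (a : A) * (c : A) ∈ 𝒜 m := by
      have := SetLike.GradedMul.mul_mem a.2 c.2
      simpa using this
    by_cases hm : m = 0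
    · subst hm
      rw [DirectSum.decompose_of_mem_same 𝒜 hac, DirectSum.decompose_of_mem_same 𝒜 c.2]
    · rw [DirectSum.decompose_of_mem_ne 𝒜 hac hm, DirectSum.decompose_of_mem_ne 𝒜 c.2 hm,
        mul_zero]
  | add c d hc hd =>
    rw [mul_add, DirectSum.decompose_add, DirectSum.decompose_add,
      DirectSum.add_apply, DirectSum.add_apply]
    push_cast
    rw [hc, hd, mul_add]

/-- For `y` homogeneous of degree `s`, the degree-`s` component of `a • y` is
`a₀ • y` where `a₀` is the degree-0 component of `a`. -/
lemma pr_smul_deg0 (N : GMod k A 𝒜) {s : ℕ} {y : N.M} (hy : y ∈ N.gr s) (a : A) :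
    N.pr s (a • y) = (DirectSum.decompose 𝒜 a 0 : A) • y := by
  induction a using DirectSum.Decomposition.inductionOn 𝒜 with
  | zero => simp [N.pr_zero]
  | @homogeneous m b =>
    have hby : (b : A) • y ∈ N.gr (m + s) := by
      have := SetLike.GradedSMul.smul_mem (A := 𝒜) (B := N.gr) b.2 hy
      simpa using this
    by_cases hm : m = 0
    · subst hm
      rw [N.pr_of_mem_same (by simpa using hby), DirectSum.decompose_of_mem_same 𝒜 b.2]
    · rw [N.pr_of_mem_ne hby (by omega), DirectSum.decompose_of_mem_ne 𝒜 b.2 hm, zero_smul]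
  | add b c hb hc =>
    rw [add_smul, N.pr_add, hb, hc, DirectSum.decompose_add, DirectSum.add_apply]
    push_cast
    rw [add_smul]

/-- The degree-`s` component of a projective graded module generated in degree `s`
is a projective `𝒜 0`-module. -/
lemma projective_component (P : GMod k A 𝒜) (s : ℕ) (hproj : Module.Projective A P.M)
    (hgen : P.gen s) : Module.Projective (𝒜 0) (P.gr s) := by
  classical
  -- the free `A`-module on the degree `s` component, mapping onto `P.M`
  set π : ((P.gr s) →₀ A) →ₗ[A] P.M :=
    Finsupp.linearCombination A (fun g : P.gr s => (g : P.M)) with hπ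
  have hπsurj : Function.Surjective π := by
    rw [← LinearMap.range_eq_top, hπ, Finsupp.range_linearCombination]
    simpa [Subtype.range_coe, GMod.gen] using hgen
  haveI := hproj
  obtain ⟨σ, hσ⟩ := Module.projective_lifting_property π LinearMap.id hπsurj
  -- the degree-0 part map on coefficients
  set d0 : A → 𝒜 0 := fun a => DirectSum.decompose 𝒜 a 0 with hd0
  have hd00 : d0 0 = 0 := by simp [hd0]
  -- split maps over 𝒜 0
  set π₀ : ((P.gr s) →₀ 𝒜 0) →ₗ[𝒜 0] P.gr s :=
    Finsupp.linearCombination (𝒜 0) (fun g : P.gr s => g) with hπ₀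
  set σ₀ : P.gr s → ((P.gr s) →₀ 𝒜 0) :=
    fun x => (σ (x : P.M)).mapRange d0 hd00 with hσ₀
  have key : ∀ x : P.gr s, π₀ (σ₀ x) = x := by
    intro x
    apply Subtype.ext
    have hπσ : π (σ (x : P.M)) = (x : P.M) := by
      rw [← LinearMap.comp_apply, hσ]; rfl
    -- compute the degree s component of both sides of hπσ
    have prhom : ∀ (c : (P.gr s) →₀ A),
        P.pr s (π c) = c.sum (fun g a => ((d0 a : A)) • (g : P.M)) := by
      intro c
      rw [hπ, Finsupp.linearCombination_apply]
      have h2 : P.pr s (c.sum fun g a => a • (g : P.M))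
          = c.sum (fun g a => P.pr s (a • (g : P.M))) :=
        map_finsuppSum (⟨⟨P.pr s, P.pr_zero s⟩, P.pr_add s⟩ : P.M →+ P.M) c _
      rw [h2]
      refine Finsupp.sum_congr (fun g _ => ?_)
      exact pr_smul_deg0 P g.2 _
    have lhs : ((π₀ (σ₀ x) : P.gr s) : P.M)
        = (σ (x : P.M)).sum (fun g a => ((d0 a : A)) • (g : P.M)) := by
      rw [hπ₀, Finsupp.linearCombination_apply, hσ₀]
      have h3 : ∀ c : (P.gr s) →₀ 𝒜 0,
          ((c.sum fun g a => a • g : P.gr s) : P.M)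
          = c.sum (fun g a => ((a : A)) • (g : P.M)) :=
        fun c => map_finsuppSum ((P.gr s).subtype.toAddMonoidHom) c _
      rw [h3]
      rw [Finsupp.sum_mapRange_index (by intro g; simp)]
    rw [lhs, ← prhom, hπσ, P.pr_of_mem_same x.2]
  -- σ₀ is `𝒜 0`-linear
  have σ₀add : ∀ x y : P.gr s, σ₀ (x + y) = σ₀ x + σ₀ y := by
    intro x y
    rw [hσ₀]
    simp only [Submodule.coe_add, map_add]
    rw [← Finsupp.mapRange_add (by intro a b; simp [hd0, DirectSum.decompose_add])]
  have σ₀smul : ∀ (a : 𝒜 0) (x : P.gr s), σ₀ (a • x) = a • σ₀ x := by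
    intro a x
    have h0 : σ₀ (a • x) = Finsupp.mapRange d0 hd00 ((a : A) • σ (x : P.M)) := by
      rw [hσ₀]
      exact congrArg _ (map_smul σ (a : A) (x : P.M))
    rw [h0]
    ext g
    simp only [hσ₀, Finsupp.mapRange_apply, Finsupp.smul_apply]
    have h1 : ((d0 ((a : A) • (σ (x : P.M)) g) : 𝒜 0) : A)
        = (a : A) * ((d0 ((σ (x : P.M)) g) : 𝒜 0) : A) := by
      rw [hd0]
      simpa [smul_eq_mul] using deg0_mul a ((σ (x : P.M)) g)
    rw [h1, smul_eq_mul, SetLike.GradeZero.coe_mul]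
  set σ₀lin : P.gr s →ₗ[𝒜 0] ((P.gr s) →₀ 𝒜 0) :=
    { toFun := σ₀, map_add' := σ₀add, map_smul' := σ₀smul } with hσ₀lin
  exact Module.Projective.of_split σ₀lin π₀ (LinearMap.ext fun x => key x)

end GenK
namespace GenK

variable {k A : Type} [Field k] [Ring A] [Algebra k A] {𝒜 : ℕ → Submodule k A}
  [GradedAlgebra 𝒜]

/-- Graded isomorphism of graded modules (as a proposition). -/
def giso (N N' : GMod k A 𝒜) : Prop :=
  ∃ e : N.M →ₗ[A] N'.M, Function.Bijective e ∧ IsGr e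

lemma giso_refl (N : GMod k A 𝒜) : giso N N :=
  ⟨LinearMap.id, Function.bijective_id, fun _ _ hx => hx⟩

/-- A graded bijection restricts to an `𝒜 0`-linear equivalence on each component. -/
noncomputable def giso.grEquiv {N N' : GMod k A 𝒜} {e : N.M →ₗ[A] N'.M}
    (hbij : Function.Bijective e) (hgr : IsGr e) (j : ℕ) :
    (N.gr j) ≃ₗ[𝒜 0] (N'.gr j) := by
  refine LinearEquiv.ofBijective
    { toFun := fun x : N.gr j => (⟨e (x : N.M), hgr j x x.2⟩ : N'.gr j)
      map_add' := fun x y => Subtype.ext (by simp)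
      map_smul' := fun a x => Subtype.ext (by
        show e ((a : A) • (x : N.M)) = (a : A) • e (x : N.M)
        exact map_smul e (a : A) (x : N.M)) } ⟨?_, ?_⟩
  · intro x y hxy
    exact Subtype.ext (hbij.1 (congrArg Subtype.val hxy))
  · rintro ⟨y, hy⟩
    obtain ⟨x, rfl⟩ := hbij.2 y
    have hx : x ∈ N.gr j := by
      have h1 : e (N.pr j x) = e x := by
        rw [← hgr.pr_comm, N'.pr_of_mem_same hy]
      exact N.mem_of_pr_eq (hbij.1 h1)
    exact ⟨⟨x, hx⟩, rfl⟩

variable {M₀ : GMod k A 𝒜}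

/-- Uniqueness of minimal covers: a graded isomorphism of syzygies propagates one
step up any two towers. -/
lemma giso_step (T T' : SyzTower M₀) (i : ℕ) (h : giso (T.N i) (T'.N i)) :
    giso (T.N (i + 1)) (T'.N (i + 1)) := by
  obtain ⟨e, hebij, hegr⟩ := h
  set q : (T.P i).M →ₗ[A] (T'.N i).M := e.comp (T.p i) with hq
  have hqgr : IsGr q := fun j x hx => hegr j _ (T.graded i j x hx)
  have hqsurj : Function.Surjective q := hebij.2.comp (T.surj i)
  have hkerq : ∀ x, q x = 0 ↔ T.p i x = 0 := by
    intro x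
    constructor
    · intro hx
      exact hebij.1 (by rw [hq] at hx; simpa [map_zero] using hx)
    · intro hx; rw [hq]; simp [hx]
  haveI := T.proj i
  obtain ⟨f, hf⟩ := Module.projective_lifting_property (T'.p i) q (T'.surj i)
  set f₀ := grd f with hf₀
  have hf₀gr : IsGr f₀ := grd_isGr f
  have hcomp : ∀ x, T'.p i (f₀ x) = q x :=
    grd_comp f (T'.graded i) hqgr hf
  -- surjectivity of f₀
  have hf₀surj : Function.Surjective f₀ := by
    rw [← LinearMap.range_eq_top]
    apply T'.small i
    rw [Submodule.eq_top_iff']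
    intro x
    obtain ⟨z, hz⟩ := hqsurj (T'.p i x)
    refine Submodule.mem_sup.2 ⟨f₀ z, ⟨z, rfl⟩, x - f₀ z, ?_, by abel⟩
    rw [LinearMap.mem_ker, map_sub, hcomp, hz, sub_self]
  -- injectivity of f₀
  have hf₀inj : Function.Injective f₀ := by
    haveI := T'.proj i
    obtain ⟨g, hg⟩ := Module.projective_lifting_property f₀ LinearMap.id hf₀surj
    have hgsurj : Function.Surjective g := by
      rw [← LinearMap.range_eq_top]
      apply T.small i
      rw [Submodule.eq_top_iff']
      intro x
      refine Submodule.mem_sup.2 ⟨g (f₀ x), ⟨f₀ x, rfl⟩, x - g (f₀ x), ?_, by abel⟩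
      rw [LinearMap.mem_ker]
      rw [← hkerq]
      rw [← hcomp]
      have : f₀ (x - g (f₀ x)) = 0 := by
        rw [map_sub]
        have : f₀ (g (f₀ x)) = f₀ x := by
          rw [← LinearMap.comp_apply, hg]; rfl
        rw [this, sub_self]
      rw [this, map_zero]
    intro x y hxy
    obtain ⟨u, rfl⟩ := hgsurj x
    obtain ⟨v, rfl⟩ := hgsurj y
    have hu : f₀ (g u) = u := by rw [← LinearMap.comp_apply, hg]; rfl
    have hv : f₀ (g v) = v := by rw [← LinearMap.comp_apply, hg]; rfl
    rw [hu, hv] at hxy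
    rw [hxy]
  -- transport to the syzygies
  have hrange : ∀ n : (T.N (i + 1)).M, f₀ ((T.ι i) n) ∈ LinearMap.range (T'.ι i) := by
    intro n
    rw [T'.rng i, LinearMap.mem_ker, hcomp, hkerq]
    have : (T.ι i) n ∈ LinearMap.ker (T.p i) := by
      rw [← T.rng i]; exact ⟨n, rfl⟩
    exact this
  set E := LinearEquiv.ofInjective (T'.ι i) (T'.inj i) with hE
  set e' : (T.N (i + 1)).M →ₗ[A] (T'.N (i + 1)).M :=
    E.symm.toLinearMap.comp ((f₀.comp (T.ι i)).codRestrict _ hrange) with he'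
  have hkey : ∀ n, (T'.ι i) (e' n) = f₀ ((T.ι i) n) := by
    intro n
    have h1 : ∀ y : LinearMap.range (T'.ι i), (T'.ι i) (E.symm y) = (y : (T'.P i).M) := by
      intro y
      have := E.apply_symm_apply y
      calc (T'.ι i) (E.symm y) = ((E (E.symm y)) : (T'.P i).M) := by
            rw [hE]; rfl
        _ = (y : (T'.P i).M) := by rw [this]
    exact h1 _
  refine ⟨e', ⟨?_, ?_⟩, ?_⟩
  · intro n m hnm
    apply T.inj i
    apply hf₀inj
    rw [← hkey, ← hkey, hnm]
  · intro m
    obtain ⟨u, hu⟩ := hf₀surj ((T'.ι i) m)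
    have hup : T.p i u = 0 := by
      rw [← hkerq, ← hcomp, hu]
      have : (T'.ι i) m ∈ LinearMap.ker (T'.p i) := by
        rw [← T'.rng i]; exact ⟨m, rfl⟩
      exact this
    have : u ∈ LinearMap.range (T.ι i) := by rw [T.rng i]; exact hup
    obtain ⟨n, rfl⟩ := this
    refine ⟨n, T'.inj i ?_⟩
    rw [hkey, hu]
  · intro j n hn
    have h1 : (T.ι i) n ∈ (T.P i).gr j := by
      have := hn
      rw [T.gr_eq i j] at this
      exact this
    have h2 : f₀ ((T.ι i) n) ∈ (T'.P i).gr j := hf₀gr j _ h1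
    rw [T'.gr_eq i j]
    show (T'.ι i) (e' n) ∈ (T'.P i).gr j
    rw [hkey]
    exact h2

end GenK
namespace GenK

variable {k A : Type} [Field k] [Ring A] [Algebra k A] {𝒜 : ℕ → Submodule k A}
  [GradedAlgebra 𝒜] {M₀ : GMod k A 𝒜}

/-- In a Koszul tower, the degree-`i` component of the `i`-th syzygy is a
projective `𝒜 0`-module. -/
lemma koszul_component (T : SyzTower M₀) (hT : ∀ i, (T.P i).gen i) (i : ℕ) :
    Module.Projective (𝒜 0) ((T.N i).gr i) := by
  haveI hPproj := projective_component (T.P i) i (T.proj i) (hT i)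
  have hpgr : IsGr (T.p i) := T.graded i
  -- the restriction of `p i` to degree `i` components
  set r : ((T.P i).gr i) →ₗ[𝒜 0] ((T.N i).gr i) :=
    { toFun := fun x : (T.P i).gr i => (⟨T.p i (x : (T.P i).M), hpgr i x x.2⟩ : (T.N i).gr i)
      map_add' := fun x y => Subtype.ext (by simp)
      map_smul' := fun a x => Subtype.ext (by
        show T.p i ((a : A) • (x : (T.P i).M)) = (a : A) • T.p i (x : (T.P i).M)
        exact map_smul (T.p i) (a : A) (x : (T.P i).M)) } with hr
  have hrbij : Function.Bijective r := by
    constructor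
    · -- injectivity: the kernel of `p i` vanishes in degree `i`
      intro x y hxy
      have hxy' : T.p i ((x : (T.P i).M) - (y : (T.P i).M)) = 0 := by
        rw [map_sub, sub_eq_zero]
        exact congrArg Subtype.val hxy
      have hmem : (x : (T.P i).M) - (y : (T.P i).M) ∈ LinearMap.range (T.ι i) := by
        rw [T.rng i]; exact hxy'
      obtain ⟨n, hn⟩ := hmem
      have hngr : n ∈ (T.N (i + 1)).gr i := by
        rw [T.gr_eq i i]
        show (T.ι i) n ∈ (T.P i).gr i
        rw [hn]
        exact Submodule.sub_mem _ x.2 y.2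
      -- but the `(i+1)`-st syzygy vanishes in degree `i`
      have hn0 : n = 0 := by
        have hpgr1 : IsGr (T.p (i + 1)) := T.graded (i + 1)
        obtain ⟨z, hz, hz'⟩ := hpgr1.component_surj (T.surj (i + 1)) hngr
        have hz0 : z = 0 := by
          have := (T.P (i + 1)).gen_pr_eq_zero (hT (i + 1)) (Nat.lt_succ_self i) z
          rwa [(T.P (i + 1)).pr_of_mem_same hz] at this
        rw [hz0, map_zero] at hz'
        exact hz'.symm
      rw [hn0, map_zero] at hn
      exact Subtype.ext (by rw [← sub_eq_zero]; exact hn.symm)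
    · rintro ⟨y, hy⟩
      obtain ⟨x, hx, hx'⟩ := hpgr.component_surj (T.surj i) hy
      exact ⟨⟨x, hx⟩, Subtype.ext hx'⟩
  exact Module.Projective.of_equiv (LinearEquiv.ofBijective r hrbij)

end GenK

open GenK in
/-- if `M` is a Koszul `A`-module, then for each `i ≥ 0` the degree-`i`
component `Ω^i(M)_i ≅ Ω^i(M)/JΩ^i(M)` of the `i`-th graded syzygy is a projective
`A₀`-module. (`T` is any tower of minimal graded projective covers, so `T.N i = Ω^i(M)`.) -/
theorem stmt5 (k A : Type) [Field k] [Ring A] [Algebra k A] (𝒜 : ℕ → Submodule k A)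
    [GradedAlgebra 𝒜]
    (hloc : ∀ i, FiniteDimensional k (𝒜 i))
    (hgen01 : ∀ i j, 𝒜 i * 𝒜 j = 𝒜 (i + j))
    (hsi : SelfInjectiveDegZero k A 𝒜)
    (M₀ : GMod k A 𝒜) (hK : IsKoszul M₀)
    (T : SyzTower M₀) (i : ℕ) :
    Module.Projective (𝒜 0) ((T.N i).gr i) := by
  obtain ⟨hgen0, T', hT'⟩ := hK
  have base : giso (T'.N 0) (T.N 0) := by
    rw [T'.zero, T.zero]
    exact giso_refl M₀
  have hiso : ∀ j, giso (T'.N j) (T.N j) := by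
    intro j
    induction j with
    | zero => exact base
    | succ n ih => exact giso_step T' T n ih
  obtain ⟨e, hbij, hgr⟩ := hiso i
  haveI := koszul_component T' hT' i
  exact Module.Projective.of_equiv (giso.grEquiv hbij hgr i)
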